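/- The one-color L, L', R' matrices satisfy the mixed Yang–Baxter equation: for all boundary values I_1, J_1, K_1, I_3, J_3, K_3 ∈ {0,1}, the sum over interior I_2, J_2, K_2 ∈ {0,1} of R'_{y/x}(I_1,J_1;I_2,J_2)·L_x(K_1,J_2;K_2,J_3)·L'_y(K_2,I_2;K_3,I_3) equals the sum over interior values of L'_y(K_1,I_1;K_2,I_2)·L_x(K_2,J_1;K_3,J_2)·R'_{y/x}(I_2,J_2;I_3,J_3), as an identity of rational functions in x, y. -/

import Mathlib

/-!
STATEMENT 8: The one-color L, L' and R' matrices satisfy the mixed Yang–Baxter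
equation, as an identity of rational functions in `x`, `y` (formalized over an
arbitrary field with `x ≠ 0` and `1 + y/x ≠ 0`, so that all weights are
defined).
-/

variable {F : Type*} [Field F]

/-- One-color L-matrix weight `L_x(i,j,k,l)`: zero unless `i + j = k + l` and
`(i,j) ≠ (1,1)`. -/
def oneLw (x : F) : Bool → Bool → Bool → Bool → F
  | false, false, false, false => 1
  | true, false, false, true => x
  | false, true, false, true => x
  | true, false, true, false => 1
  | false, true, true, false => 1
  | _, _, _, _ => 0

/-- One-color L'-matrix weight `L'_y(i,j,k,l)`: zero unless `i + j = k + l` and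
`k ≥ j`. -/
def oneL'w (y : F) : Bool → Bool → Bool → Bool → F
  | true, false, true, false => 1
  | false, true, true, false => 1
  | true, true, true, true => y
  | false, false, false, false => 1
  | true, false, false, true => y
  | _, _, _, _ => 0

/-- One-color R'-matrix weight `R'_z(i,j,k,l)` with `z = y/x`: zero unless
`i + j = k + l` and `(i,j) ≠ (1,1)`. -/
def oneR'w (z : F) : Bool → Bool → Bool → Bool → F
  | false, true, false, true => 1 / (1 + z)
  | false, true, true, false => z / (1 + z)
  | true, false, false, true => 1 / (1 + z)
  | true, false, true, false => z / (1 + z)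
  | false, false, false, false => 1
  | _, _, _, _ => 0

set_option maxHeartbeats 1000000 in
/-- The mixed Yang–Baxter equation for the one-color `L`, `L'`, `R'` matrices:
for all boundary values, summing over the interior values `I₂, J₂, K₂`,
`∑ R'_{y/x}(I₁,J₁;I₂,J₂) L_x(K₁,J₂;K₂,J₃) L'_y(K₂,I₂;K₃,I₃)
  = ∑ L'_y(K₁,I₁;K₂,I₂) L_x(K₂,J₁;K₃,J₂) R'_{y/x}(I₂,J₂;I₃,J₃)`. -/
theorem one_color_mixed_YBE (x y : F) (hx : x ≠ 0) (hz : 1 + y / x ≠ 0)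
    (I₁ J₁ K₁ I₃ J₃ K₃ : Bool) :
    (∑ v : Bool × Bool × Bool,
        oneR'w (y / x) I₁ J₁ v.1 v.2.1 * oneLw x K₁ v.2.1 v.2.2 J₃ *
          oneL'w y v.2.2 v.1 K₃ I₃)
      = ∑ v : Bool × Bool × Bool,
          oneL'w y K₁ I₁ v.2.2 v.1 * oneLw x v.2.2 J₁ K₃ v.2.1 *
            oneR'w (y / x) v.1 v.2.1 I₃ J₃ := by
  have h : y + x ≠ 0 := fun h0 => hz (by field_simp; rw [add_comm, mul_zero]; exact h0)
  have h' : x + y ≠ 0 := by rwa [add_comm] at h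
  rcases I₁ <;> rcases J₁ <;> rcases K₁ <;> rcases I₃ <;> rcases J₃ <;> rcases K₃ <;>
    simp only [Fintype.sum_prod_type, Fintype.sum_bool,
      oneLw, oneL'w, oneR'w] <;>
    field_simp [h, h'] <;> ring
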